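/- The inhomogeneous-coordinate bracket {f,g} = ∂_{v^{α̇}}f ∂^{v}_{α̇}g + Λ(v^{α̇}∂_{v^{α̇}}f ∂_z g − 2 f ∂_z g − v^{α̇}∂_{v^{α̇}}g ∂_z f + 2 g ∂_z f) is antisymmetric and satisfies the Jacobi identity on smooth (polynomial) functions of (v⁰, v¹, z), i.e. it is a Jacobi bracket; but for Λ ≠ 0 it fails the Leibniz rule: there exist f, g, h with {f, gh} ≠ {f,g}h + g{f,h}. -/

import Mathlib

open MvPolynomial

theorem pderiv_comm' {σ : Type*} [DecidableEq σ] {R : Type*} [CommSemiring R]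
    (i j : σ) (f : MvPolynomial σ R) :
    pderiv i (pderiv j f) = pderiv j (pderiv i f) := by
  induction f using MvPolynomial.induction_on' with
  | monomial s a =>
    simp only [pderiv_monomial]
    rcases eq_or_ne i j with rfl | hij
    · rfl
    · have h1 : ((s - Finsupp.single j 1 : σ →₀ ℕ)) i = s i := by
        simp [Finsupp.tsub_apply, Finsupp.single_apply, hij.symm]
      have h2 : ((s - Finsupp.single i 1 : σ →₀ ℕ)) j = s j := by
        simp [Finsupp.tsub_apply, Finsupp.single_apply, hij]
      have h3 : (s - Finsupp.single j 1 - Finsupp.single i 1 : σ →₀ ℕ)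
          = s - Finsupp.single i 1 - Finsupp.single j 1 := by
        rw [tsub_tsub, tsub_tsub, add_comm]
      rw [h1, h2, h3]
      ring_nf
  | add p q hp hq => simp [hp, hq]

section Aux

variable {K : Type*} [Field K]

lemma pd10 (f : MvPolynomial (Fin 3) K) :
    pderiv 1 (pderiv 0 f) = pderiv 0 (pderiv 1 f) := pderiv_comm' 1 0 f
lemma pd20 (f : MvPolynomial (Fin 3) K) :
    pderiv 2 (pderiv 0 f) = pderiv 0 (pderiv 2 f) := pderiv_comm' 2 0 f
lemma pd21 (f : MvPolynomial (Fin 3) K) :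
    pderiv 2 (pderiv 1 f) = pderiv 1 (pderiv 2 f) := pderiv_comm' 2 1 f

lemma pderiv_two (i : Fin 3) : pderiv i (2 : MvPolynomial (Fin 3) K) = 0 := by
  rw [show (2 : MvPolynomial (Fin 3) K) = C 2 from (map_ofNat C 2).symm, pderiv_C]

end Aux

/-- The inhomogeneous-coordinate Jacobi bracket on `K[v⁰, v¹, z]`
(variables indexed `0 = v⁰, 1 = v¹, 2 = z`):
`{f,g}_Λ = ∂_{v⁰}f ∂_{v¹}g − ∂_{v¹}f ∂_{v⁰}g
  + Λ((v⁰∂_{v⁰}f + v¹∂_{v¹}f − 2f)∂_z g − (v⁰∂_{v⁰}g + v¹∂_{v¹}g − 2g)∂_z f)`. -/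
noncomputable def jb {K : Type*} [Field K] [CharZero K] (Λ : K)
    (f g : MvPolynomial (Fin 3) K) : MvPolynomial (Fin 3) K :=
  pderiv 0 f * pderiv 1 g - pderiv 1 f * pderiv 0 g
    + C Λ * ((X 0 * pderiv 0 f + X 1 * pderiv 1 f - 2 * f) * pderiv 2 g
           - (X 0 * pderiv 0 g + X 1 * pderiv 1 g - 2 * g) * pderiv 2 f)

/-- The inhomogeneous bracket is antisymmetric and satisfies the Jacobi
identity (it is a Jacobi bracket), but for `Λ ≠ 0` it fails the Leibniz rule. -/
theorem jacobi_bracket_not_poisson {K : Type*} [Field K] [CharZero K] (Λ : K) :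
    (∀ f g : MvPolynomial (Fin 3) K, jb Λ f g = - jb Λ g f) ∧
    (∀ f g h : MvPolynomial (Fin 3) K,
      jb Λ f (jb Λ g h) + jb Λ g (jb Λ h f) + jb Λ h (jb Λ f g) = 0) ∧
    (Λ ≠ 0 → ∃ f g h : MvPolynomial (Fin 3) K,
      jb Λ f (g * h) ≠ jb Λ f g * h + g * jb Λ f h) := by
  refine ⟨fun f g => by unfold jb; ring, fun f g h => ?_, fun hΛ => ?_⟩
  · simp only [jb, map_add, map_sub, map_mul, pderiv_mul, pderiv_C, pderiv_two,
      pderiv_X_self, pderiv_X_of_ne (show (1:Fin 3) ≠ 0 by decide),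
      pderiv_X_of_ne (show (0:Fin 3) ≠ 1 by decide),
      pderiv_X_of_ne (show (0:Fin 3) ≠ 2 by decide),
      pderiv_X_of_ne (show (1:Fin 3) ≠ 2 by decide),
      pd10, pd20, pd21, zero_mul, mul_zero, zero_add, add_zero, one_mul]
    ring
  · refine ⟨X 2, 1, 1, ?_⟩
    have hx : jb Λ (X 2) 1 = 2 * C Λ := by
      simp only [jb, pderiv_one, pderiv_X_self,
        pderiv_X_of_ne (show (2:Fin 3) ≠ 0 by decide),
        pderiv_X_of_ne (show (2:Fin 3) ≠ 1 by decide)]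
      ring
    rw [one_mul, hx, mul_one, one_mul]
    intro hcontra
    have : (2 : MvPolynomial (Fin 3) K) * C Λ = 0 := by linear_combination -hcontra
    rcases mul_eq_zero.1 this with h2 | hc
    · exact two_ne_zero h2
    · exact hΛ (by simpa using hc)
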